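/- For the generating functions 𝔏_k(t) = Σ_{n≥0} L_{n,k} t^n of the columns of the Lucas matrix, 𝔏_0(t) = (2−t)/(1−t) and 𝔏_k(t) = (t²/(1−t))·𝔏_{k−1}(t) for k ≥ 1. -/

import Mathlib

open PowerSeries

noncomputable section

/-- An infinite real matrix is totally positive if every finite minor
(with strictly increasing row and column indices) is nonnegative. -/
def TotallyPos (M : ℕ → ℕ → ℝ) : Prop :=
  ∀ (k : ℕ) (r c : Fin k → ℕ), StrictMono r → StrictMono c →
    0 ≤ (Matrix.of fun i j => M (r i) (c j)).det

/-- The Riordan array R(d(t), h(t)): entry (n,k) is the coefficient of t^n in d * h^k. -/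
def riordan (d h : PowerSeries ℝ) (n k : ℕ) : ℝ :=
  PowerSeries.coeff n (d * h ^ k)

/-- The lower triangular Toeplitz matrix of a sequence. -/
def toeplitz (a : ℕ → ℝ) (i j : ℕ) : ℝ :=
  if j ≤ i then a (i - j) else 0

/-- The Hessenberg matrix: first column (d₀,d₁,…), and entry (i,j) = h_{i-j+1} for j ≥ 1. -/
def hess (d h : ℕ → ℝ) (i j : ℕ) : ℝ :=
  if j = 0 then d i else if j ≤ i + 1 then h (i + 1 - j) else 0

/-- Lucas polynomials: L₀ = 2, L₁ = 1, L_{n+2} = L_{n+1} + x·L_n. -/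
def lucas : ℕ → Polynomial ℝ
  | 0 => 2
  | 1 => 1
  | n + 2 => lucas (n + 1) + Polynomial.X * lucas n

lemma lucas_coeff_zero : ∀ n, (lucas n).coeff 0 = if n = 0 then 2 else 1
  | 0 => by simp [lucas]
  | 1 => by simp [lucas]
  | n+2 => by
    rw [lucas]
    simp [Polynomial.mul_coeff_zero, lucas_coeff_zero (n+1)]

lemma lucas_coeff_succ (k : ℕ) :
    ∀ n, (lucas n).coeff (k+1) = ∑ m ∈ Finset.range (n-1), (lucas m).coeff k
  | 0 => by simp [lucas]
  | 1 => by simp [lucas, Polynomial.coeff_one]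
  | n+2 => by
    rw [lucas]
    simp only [Polynomial.coeff_add, Polynomial.coeff_X_mul,
      lucas_coeff_succ k (n+1)]
    rw [show n+2-1 = n+1 from rfl, show n+1-1 = n from rfl, Finset.sum_range_succ]

lemma lucas_key (j n : ℕ) :
    ∑ k ∈ Finset.range (n+1), (if k ≤ 1 then (0:ℝ) else 1) * (lucas (n-k)).coeff j
      = ∑ m ∈ Finset.range (n-1), (lucas m).coeff j := by
  rw [← Finset.sum_range_reflect]
  have h1 : ∀ x ∈ Finset.range (n+1),
      (if n + 1 - 1 - x ≤ 1 then (0:ℝ) else 1) * (lucas (n - (n + 1 - 1 - x))).coeff j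
      = if x ∈ Finset.range (n-1) then (lucas x).coeff j else 0 := by
    intro x hx
    simp only [Finset.mem_range] at hx ⊢
    have hxn : x ≤ n := by omega
    rw [show n + 1 - 1 - x = n - x from rfl, Nat.sub_sub_self hxn]
    by_cases h : n - x ≤ 1
    · have h2 : ¬ x < n - 1 := by omega
      simp [h, h2]
    · have h2 : x < n - 1 := by omega
      simp [h, h2]
  rw [Finset.sum_congr rfl h1, Finset.sum_ite_mem]
  congr 1
  have : Finset.range (n-1) ⊆ Finset.range (n+1) := Finset.range_subset_range.mpr (by omega)
  exact Finset.inter_eq_right.mpr this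

theorem stmt16 :
    (PowerSeries.mk (fun n => (lucas n).coeff 0) =
      PowerSeries.mk (fun n => if n = 0 then (2 : ℝ) else 1)) ∧
    (∀ k : ℕ, 1 ≤ k →
      PowerSeries.mk (fun n => (lucas n).coeff k) =
        PowerSeries.mk (fun n => if n ≤ 1 then (0 : ℝ) else 1) *
          PowerSeries.mk (fun n => (lucas n).coeff (k - 1))) := by
  constructor
  · ext n
    simp [lucas_coeff_zero]
  · intro k hk
    obtain ⟨j, rfl⟩ : ∃ j, k = j + 1 := ⟨k - 1, by omega⟩
    ext n
    rw [PowerSeries.coeff_mul]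
    simp only [PowerSeries.coeff_mk, Nat.add_sub_cancel]
    rw [lucas_coeff_succ j n,
      Finset.Nat.sum_antidiagonal_eq_sum_range_succ
        (f := fun a b => (if a ≤ 1 then (0:ℝ) else 1) * (lucas b).coeff j),
      lucas_key j n]
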